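/- Let n be a power of 2 and let L be an n × n modular-balanced permutation matrix over ℂ. Then L is a butterfly matrix of size n. -/
import Mathlib


noncomputable section

open Matrix

/-- A butterfly factor matrix of size `n` with block size `k`: a block-diagonal matrix
whose `n/k` diagonal blocks are butterfly factors of size `k`, i.e. `k × k` matrices of
the block form `[[D1, D2], [D3, D4]]` with each `Dᵢ` a `(k/2) × (k/2)` diagonal matrix.
Equivalently, nonzero entries may occur only at positions `(i, j)` lying in the same
diagonal `k × k` block and with `i ≡ j (mod k/2)`. -/
def IsButterflyFactorMatrix (n k : ℕ) (B : Matrix (Fin n) (Fin n) ℂ) : Prop :=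
  2 ≤ k ∧ k ∣ n ∧
    ∀ i j : Fin n, B i j ≠ 0 →
      i.val / k = j.val / k ∧ i.val % (k / 2) = j.val % (k / 2)

/-- A butterfly matrix of size `n = 2^b`: a product `B_n · B_{n/2} · ⋯ · B_2` where `B_k`
is a butterfly factor matrix of size `n` with block size `k`. -/
def IsButterflyMatrix (n : ℕ) (M : Matrix (Fin n) (Fin n) ℂ) : Prop :=
  ∃ b : ℕ, n = 2 ^ b ∧
    ∃ B : ℕ → Matrix (Fin n) (Fin n) ℂ,
      (∀ t, 1 ≤ t → t ≤ b → IsButterflyFactorMatrix n (2 ^ t) (B t)) ∧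
      M = (List.ofFn fun t : Fin b => B (b - t.val)).prod

/-- `M ∈ BB*`: `M = M1 · M2ᴴ` with `M1`, `M2` butterfly matrices. -/
def InBBStar (n : ℕ) (M : Matrix (Fin n) (Fin n) ℂ) : Prop :=
  ∃ M1 M2 : Matrix (Fin n) (Fin n) ℂ,
    IsButterflyMatrix n M1 ∧ IsButterflyMatrix n M2 ∧ M = M1 * M2ᴴ

/-- `M ∈ (BB*)^w`: `M` is a product of `w` matrices each in `BB*`. -/
def InBBStarPow (n w : ℕ) (M : Matrix (Fin n) (Fin n) ℂ) : Prop :=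
  ∃ f : Fin w → Matrix (Fin n) (Fin n) ℂ,
    (∀ i, InBBStar n (f i)) ∧ M = (List.ofFn f).prod

/-- `M ∈ (BB*)^w_e`: `M` (of size `n × n`) is the upper-left `n × n` corner of an
`en × en` matrix `E ∈ (BB*)^w`. -/
def InBBStarPowExp (n w e : ℕ) (M : Matrix (Fin n) (Fin n) ℂ) : Prop :=
  ∃ E : Matrix (Fin (e * n)) (Fin (e * n)) ℂ,
    InBBStarPow (e * n) w E ∧
    ∀ (i j : Fin n) (hi : i.val < e * n) (hj : j.val < e * n),
      M i j = E ⟨i.val, hi⟩ ⟨j.val, hj⟩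

/-- `P` is a permutation matrix. -/
def IsPermutationMatrix (n : ℕ) (P : Matrix (Fin n) (Fin n) ℂ) : Prop :=
  ∃ σ : Equiv.Perm (Fin n), ∀ i j, P i j = if i = σ j then 1 else 0

/-- `M` (with at most one nonzero entry per column) meets the `s` balance condition:
partitioning the columns into consecutive chunks of size `s`, every chunk contains, for
each residue `0 ≤ m < s`, exactly one column whose nonzero entry lies in a row with
index `≡ m (mod s)`. -/
def MeetsBalance (n s : ℕ) (M : Matrix (Fin n) (Fin n) ℂ) : Prop :=
  ∀ c < n / s, ∀ m < s,
    {j : Fin n | j.val / s = c ∧ ∃ i : Fin n, M i j ≠ 0 ∧ i.val % s = m}.ncard = 1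

/-- `M` is modular-balanced: it meets the `2^j` balance condition for all `2 ≤ 2^j ≤ n`. -/
def ModularBalanced (n : ℕ) (M : Matrix (Fin n) (Fin n) ℂ) : Prop :=
  ∀ j : ℕ, 1 ≤ j → 2 ^ j ≤ n → MeetsBalance n (2 ^ j) M

/-- `H` is a horizontal step matrix: whenever `H[i,j] ≠ 0` and `H[i',j'] ≠ 0` with
`j ≤ j'`, we have `j' - j ≥ (i' - i) mod n`. -/
def IsHorizontalStep (n : ℕ) (H : Matrix (Fin n) (Fin n) ℂ) : Prop :=
  ∀ i i' j j' : Fin n, j.val ≤ j'.val → H i j ≠ 0 → H i' j' ≠ 0 →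
    ((i'.val : ℤ) - (i.val : ℤ)) % (n : ℤ) ≤ (j'.val : ℤ) - (j.val : ℤ)

/-- Reversal of the `b` low-order bits of `x`. -/
def bitRev (b x : ℕ) : ℕ :=
  (Finset.range b).sum fun t => x / 2 ^ t % 2 * 2 ^ (b - 1 - t)


/-- Permutation-style 0/1 matrix of a function. -/
def Pm (n : ℕ) (f : Fin n → Fin n) : Matrix (Fin n) (Fin n) ℂ :=
  Matrix.of fun i j => if i = f j then 1 else 0

lemma Pm_mul (n : ℕ) (f g : Fin n → Fin n) : Pm n f * Pm n g = Pm n (f ∘ g) := by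
  ext i j
  simp only [Pm, Matrix.mul_apply, Matrix.of_apply, Function.comp]
  rw [Finset.sum_eq_single (g j)]
  · simp
  · intro k _ hk; simp [hk]
  · simp

lemma Pm_id (n : ℕ) : Pm n id = 1 := by
  ext i j
  simp [Pm, Matrix.one_apply, eq_comm]

/-- Level-`t` truncation of a permutation of `Fin (2^b)`. -/
def pifun (b : ℕ) (σ : Equiv.Perm (Fin (2 ^ b))) (t : ℕ) (x : Fin (2 ^ b)) : Fin (2 ^ b) :=
  ⟨2 ^ t * (x.val / 2 ^ t) + (σ x).val % 2 ^ t, by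
    have h1 : (σ x).val % 2 ^ t < 2 ^ t := Nat.mod_lt _ (Nat.two_pow_pos t)
    rcases le_or_gt t b with ht | ht
    · have hd : 2 ^ t ∣ 2 ^ b := pow_dvd_pow 2 ht
      have h2 : x.val / 2 ^ t < 2 ^ b / 2 ^ t := Nat.div_lt_div_of_lt_of_dvd hd x.isLt
      calc 2 ^ t * (x.val / 2 ^ t) + (σ x).val % 2 ^ t
          < 2 ^ t * (x.val / 2 ^ t) + 2 ^ t := by omega
        _ = 2 ^ t * (x.val / 2 ^ t + 1) := (Nat.mul_succ _ _).symm
        _ ≤ 2 ^ t * (2 ^ b / 2 ^ t) := Nat.mul_le_mul_left _ h2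
        _ = 2 ^ b := Nat.mul_div_cancel' hd
    · have hx0 : x.val / 2 ^ t = 0 :=
        Nat.div_eq_of_lt (lt_of_lt_of_le x.isLt (Nat.pow_le_pow_right (by norm_num) ht.le))
      have h3 : (σ x).val % 2 ^ t ≤ (σ x).val := Nat.mod_le _ _
      have h4 := (σ x).isLt
      rw [hx0, Nat.mul_zero, Nat.zero_add]
      omega⟩

lemma pifun_div (b : ℕ) (σ : Equiv.Perm (Fin (2 ^ b))) (t : ℕ) (x : Fin (2 ^ b)) :
    (pifun b σ t x).val / 2 ^ t = x.val / 2 ^ t := by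
  have h1 : (σ x).val % 2 ^ t < 2 ^ t := Nat.mod_lt _ (Nat.two_pow_pos t)
  show (2 ^ t * (x.val / 2 ^ t) + (σ x).val % 2 ^ t) / 2 ^ t = _
  rw [Nat.mul_add_div (Nat.two_pow_pos t), Nat.div_eq_of_lt h1, add_zero]

lemma pifun_mod (b : ℕ) (σ : Equiv.Perm (Fin (2 ^ b))) (t : ℕ) (x : Fin (2 ^ b)) :
    (pifun b σ t x).val % 2 ^ t = (σ x).val % 2 ^ t := by
  show (2 ^ t * (x.val / 2 ^ t) + (σ x).val % 2 ^ t) % 2 ^ t = _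
  rw [Nat.mul_add_mod, Nat.mod_mod_of_dvd _ dvd_rfl]

lemma pifun_zero (b : ℕ) (σ : Equiv.Perm (Fin (2 ^ b))) (x : Fin (2 ^ b)) :
    pifun b σ 0 x = x := by
  apply Fin.ext
  simp [pifun, Nat.mod_one]

lemma pifun_top (b : ℕ) (σ : Equiv.Perm (Fin (2 ^ b))) (x : Fin (2 ^ b)) :
    pifun b σ b x = σ x := by
  apply Fin.ext
  simp [pifun, Nat.div_eq_of_lt x.isLt, Nat.mod_eq_of_lt (σ x).isLt]

lemma pifun_inj (b : ℕ) (σ : Equiv.Perm (Fin (2 ^ b))) (L : Matrix (Fin (2 ^ b)) (Fin (2 ^ b)) ℂ)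
    (hσ : ∀ i j, L i j = if i = σ j then 1 else 0)
    (hbal : ModularBalanced (2 ^ b) L) (t : ℕ) (ht : t ≤ b) :
    Function.Injective (pifun b σ t) := by
  rcases Nat.eq_zero_or_pos t with rfl | ht1
  · intro x y h
    rwa [pifun_zero, pifun_zero] at h
  · intro x y h
    have hv := congrArg Fin.val h
    have hdiv : x.val / 2 ^ t = y.val / 2 ^ t := by
      rw [← pifun_div b σ t x, ← pifun_div b σ t y, hv]
    have hmod : (σ x).val % 2 ^ t = (σ y).val % 2 ^ t := by
      rw [← pifun_mod b σ t x, ← pifun_mod b σ t y, hv]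
    have hpow : 2 ^ t ≤ 2 ^ b := Nat.pow_le_pow_right (by norm_num) ht
    have hc : x.val / 2 ^ t < 2 ^ b / 2 ^ t :=
      Nat.div_lt_div_of_lt_of_dvd (pow_dvd_pow 2 ht) x.isLt
    have hm : (σ x).val % 2 ^ t < 2 ^ t := Nat.mod_lt _ (Nat.two_pow_pos t)
    have hb1 := hbal t ht1 hpow (x.val / 2 ^ t) hc ((σ x).val % 2 ^ t) hm
    obtain ⟨a, ha⟩ := Set.ncard_eq_one.mp hb1
    have hx : x ∈ {j : Fin (2 ^ b) | j.val / 2 ^ t = x.val / 2 ^ t ∧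
        ∃ i : Fin (2 ^ b), L i j ≠ 0 ∧ i.val % 2 ^ t = (σ x).val % 2 ^ t} :=
      ⟨rfl, σ x, by rw [hσ]; simp, rfl⟩
    have hy : y ∈ {j : Fin (2 ^ b) | j.val / 2 ^ t = x.val / 2 ^ t ∧
        ∃ i : Fin (2 ^ b), L i j ≠ 0 ∧ i.val % 2 ^ t = (σ x).val % 2 ^ t} :=
      ⟨hdiv.symm, σ y, by rw [hσ]; simp, hmod.symm⟩
    rw [ha, Set.mem_singleton_iff] at hx hy
    exact hx.trans hy.symm

lemma exists_perm_family (b : ℕ) (σ : Equiv.Perm (Fin (2 ^ b)))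
    (hinj : ∀ t, t ≤ b → Function.Injective (pifun b σ t)) :
    ∃ E : ℕ → Equiv.Perm (Fin (2 ^ b)), ∀ t, t ≤ b → ∀ x, E t x = pifun b σ t x := by
  refine ⟨fun t => Equiv.ofBijective (pifun b σ (min t b))
    (Finite.injective_iff_bijective.mp (hinj _ (min_le_right _ _))), fun t ht x => ?_⟩
  show pifun b σ (min t b) x = pifun b σ t x
  rw [min_eq_left ht]

lemma Pm_telescope (n b : ℕ) (E : ℕ → Equiv.Perm (Fin n)) : ∀ j : ℕ,
    (List.ofFn fun t : Fin j => Pm n (⇑(E (b - t.val)) ∘ ⇑((E (b - t.val - 1)).symm))).prod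
      = Pm n (⇑(E b) ∘ ⇑((E (b - j)).symm)) := by
  intro j
  induction j with
  | zero =>
      simp only [List.ofFn_zero, List.prod_nil, Nat.sub_zero]
      have hcomp : ⇑(E b) ∘ ⇑((E b).symm) = id := by
        funext z; exact Equiv.apply_symm_apply (E b) z
      rw [hcomp, Pm_id]
  | succ j ih =>
      rw [List.ofFn_succ', List.concat_eq_append, List.prod_append]
      simp only [Fin.coe_castSucc, Fin.val_last, List.prod_singleton]
      rw [ih, Pm_mul]
      have hfun : (⇑(E b) ∘ ⇑(Equiv.symm (E (b - j)))) ∘ ⇑(E (b - j)) ∘ ⇑(Equiv.symm (E (b - j - 1)))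
          = ⇑(E b) ∘ ⇑(Equiv.symm (E (b - (j + 1)))) := by
        rw [Nat.sub_sub]
        funext z
        simp only [Function.comp_apply, Equiv.symm_apply_apply]
      rw [hfun]

/-- Every modular-balanced `n × n` permutation matrix is a butterfly
matrix. -/
theorem modular_balanced_perm_is_butterfly (b n : ℕ) (hn : n = 2 ^ b)
    (L : Matrix (Fin n) (Fin n) ℂ) (hperm : IsPermutationMatrix n L)
    (hbal : ModularBalanced n L) :
    IsButterflyMatrix n L := by
  subst hn
  obtain ⟨σ, hσ⟩ := hperm
  obtain ⟨E, hE⟩ := exists_perm_family b σ (fun t ht => pifun_inj b σ L hσ hbal t ht)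
  refine ⟨b, rfl, fun t => Pm (2 ^ b) (⇑(E t) ∘ ⇑((E (t - 1)).symm)), ?_, ?_⟩
  · intro t ht1 htb
    obtain ⟨s, rfl⟩ : ∃ s, t = s + 1 := ⟨t - 1, by omega⟩
    refine ⟨Nat.one_lt_two_pow_iff.mpr (by omega), pow_dvd_pow 2 htb, ?_⟩
    intro i j hij
    have hij' : i = E (s + 1) ((E (s + 1 - 1)).symm j) := by
      by_contra hne
      exact hij (if_neg hne)
    have hs : s + 1 - 1 = s := rfl
    rw [hs] at hij'
    set x := (E s).symm j with hxdef
    have hxj : j = pifun b σ s x := by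
      rw [← hE s (by omega) x, hxdef, Equiv.apply_symm_apply]
    have hxi : i = pifun b σ (s + 1) x := by
      rw [hij', hE (s + 1) htb x]
    have hk2 : 2 ^ (s + 1) / 2 = 2 ^ s := by
      rw [pow_succ, Nat.mul_div_cancel _ (by norm_num)]
    constructor
    · rw [hxi, hxj, pifun_div b σ (s + 1) x]
      rw [pow_succ, ← Nat.div_div_eq_div_mul, ← Nat.div_div_eq_div_mul,
        pifun_div b σ s x]
    · rw [hk2, hxi, hxj, pifun_mod b σ s x,
        ← Nat.mod_mod_of_dvd (pifun b σ (s+1) x).val (pow_dvd_pow 2 (Nat.le_succ s)),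
        pifun_mod b σ (s + 1) x, Nat.mod_mod_of_dvd _ (pow_dvd_pow 2 (Nat.le_succ s))]
  · rw [Pm_telescope (2 ^ b) b E b]
    simp only [Nat.sub_self]
    have h1 : ⇑(E b) ∘ ⇑((E 0).symm) = ⇑σ := by
      funext z
      have h0 : (E 0).symm z = z := by
        have h2 := hE 0 (Nat.zero_le b) ((E 0).symm z)
        rw [Equiv.apply_symm_apply, pifun_zero] at h2
        exact h2.symm
      simp only [Function.comp_apply, h0]
      rw [hE b le_rfl, pifun_top]
    rw [h1]
    ext i j
    rw [hσ]
    rfl
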